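/- Let p be a prime, z ∈ ℤ_p, and k ≥ 0 an integer. Then the Haar volume of the set {(x, y) ∈ ℤ_p² : p^k divides x(y − z)} is at most (k+1) · p^{−k}. -/

import Mathlib

open MeasureTheory
open scoped ENNReal

/-- The Borel σ-algebra on the `p`-adic integers. -/
noncomputable instance padicMeasurableSpace (p : ℕ) [Fact p.Prime] :
    MeasurableSpace ℤ_[p] := borel _

instance padicBorelSpace (p : ℕ) [Fact p.Prime] : BorelSpace ℤ_[p] := ⟨rfl⟩

/-- The Haar measure on `ℤ_p`, normalized so that `vol (ℤ_p) = 1`. -/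
noncomputable def padicHaar (p : ℕ) [Fact p.Prime] : Measure ℤ_[p] :=
  Measure.addHaarMeasure
    ⟨⟨Set.univ, isCompact_univ⟩, by rw [interior_univ]; exact Set.univ_nonempty⟩

lemma padicHaar_univ (p : ℕ) [Fact p.Prime] : padicHaar p Set.univ = 1 := by
  rw [padicHaar]; exact Measure.addHaarMeasure_self

instance padicHaarLeftInvariant (p : ℕ) [Fact p.Prime] :
    (padicHaar p).IsAddLeftInvariant := by
  unfold padicHaar; infer_instance

instance padicHaarFinite (p : ℕ) [Fact p.Prime] : IsFiniteMeasure (padicHaar p) :=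
  ⟨by rw [padicHaar_univ]; exact ENNReal.one_lt_top⟩

lemma prime_pow_dvd_mul_split {R : Type*} [CommMonoidWithZero R] [IsCancelMulZero R] {q : R}
    (hq : Prime q) : ∀ (k : ℕ) (a b : R), q ^ k ∣ a * b →
    ∃ i ≤ k, q ^ i ∣ a ∧ q ^ (k - i) ∣ b := by
  intro k
  induction k with
  | zero => exact fun a b _ => ⟨0, le_refl 0, by simp, by simp⟩
  | succ k ih =>
    intro a b h
    have hq1 : q ∣ a * b := (dvd_pow_self q (Nat.succ_ne_zero k)).trans h
    rcases hq.2.2 a b hq1 with hqa | hqb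
    · obtain ⟨a', rfl⟩ := hqa
      have h' : q ^ k ∣ a' * b := by
        have : q * q ^ k ∣ q * (a' * b) := by
          rw [← pow_succ']; rwa [mul_assoc] at h
        exact (mul_dvd_mul_iff_left hq.ne_zero).mp this
      obtain ⟨i, hik, h1, h2⟩ := ih a' b h'
      refine ⟨i + 1, Nat.succ_le_succ hik, ?_, ?_⟩
      · rw [pow_succ']; exact mul_dvd_mul_left q h1
      · rwa [Nat.succ_sub_succ]
    · obtain ⟨b', rfl⟩ := hqb
      have h' : q ^ k ∣ a * b' := by
        have : q * q ^ k ∣ q * (a * b') := by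
          rw [← pow_succ']
          rwa [mul_left_comm a q b'] at h
        exact (mul_dvd_mul_iff_left hq.ne_zero).mp this
      obtain ⟨i, hik, h1, h2⟩ := ih a b' h'
      refine ⟨i, hik.trans (Nat.le_succ k), h1, ?_⟩
      have : k + 1 - i = (k - i) + 1 := by omega
      rw [this, pow_succ']
      exact mul_dvd_mul_left q h2

lemma padicHaar_dvd_measurable (p : ℕ) [Fact p.Prime] (n : ℕ) :
    MeasurableSet {x : ℤ_[p] | (p : ℤ_[p]) ^ n ∣ x} := by
  have : {x : ℤ_[p] | (p : ℤ_[p]) ^ n ∣ x}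
      = {x : ℤ_[p] | ‖x‖ ≤ (p : ℝ) ^ (-(n : ℤ))} := by
    ext x
    simp only [Set.mem_setOf_eq, PadicInt.norm_le_pow_iff_mem_span_pow,
      Ideal.mem_span_singleton]
  rw [this]
  exact (isClosed_le continuous_norm continuous_const).measurableSet

lemma padicHaar_dvd_pow (p : ℕ) [Fact p.Prime] (n : ℕ) :
    padicHaar p {x : ℤ_[p] | (p : ℤ_[p]) ^ n ∣ x} = ((p : ℝ≥0∞) ^ n)⁻¹ := by
  haveI : NeZero (p ^ n) := ⟨pow_ne_zero n (Nat.Prime.ne_zero Fact.out)⟩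
  set μ := padicHaar p
  set S : Set ℤ_[p] := {x | (p : ℤ_[p]) ^ n ∣ x} with hS
  have hSmem : ∀ x : ℤ_[p], x ∈ S ↔ (PadicInt.toZModPow n) x = 0 := fun x => by
    rw [hS, Set.mem_setOf_eq, ← Ideal.mem_span_singleton, ← PadicInt.ker_toZModPow,
      RingHom.mem_ker]
  have hSm : MeasurableSet S := padicHaar_dvd_measurable p n
  have key : ∀ c : ZMod (p ^ n),
      MeasurableSet ((PadicInt.toZModPow n) ⁻¹' {c}) ∧
      μ ((PadicInt.toZModPow n) ⁻¹' {c}) = μ S := by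
    intro c
    have hfc : (PadicInt.toZModPow n) ((c.val : ℤ_[p])) = c := by
      rw [map_natCast]; exact ZMod.natCast_rightInverse c
    have hset : (PadicInt.toZModPow n) ⁻¹' {c}
        = (fun x => (-(c.val : ℤ_[p])) + x) ⁻¹' S := by
      ext x
      simp only [Set.mem_preimage, Set.mem_singleton_iff, hSmem, map_add, map_neg, hfc,
        neg_add_eq_zero]
      exact eq_comm
    constructor
    · rw [hset]; exact hSm.preimage (measurable_const_add _)
    · rw [hset, measure_preimage_add]
  have hcover : (Set.univ : Set ℤ_[p]) = ⋃ c : ZMod (p ^ n),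
      (PadicInt.toZModPow n) ⁻¹' {c} := by
    ext x; simp
  have hdisj : Pairwise (Function.onFun Disjoint
      fun c : ZMod (p ^ n) => (PadicInt.toZModPow n) ⁻¹' {c}) := by
    intro c d hcd
    exact Set.disjoint_left.2 fun x hx hx' => hcd (hx.symm.trans hx')
  have h1 : ((p ^ n : ℕ) : ℝ≥0∞) * μ S = 1 := by
    have := padicHaar_univ p
    rw [hcover, measure_iUnion hdisj (fun c => (key c).1), tsum_fintype] at this
    rw [← this]
    rw [Finset.sum_congr rfl (fun c _ => (key c).2), Finset.sum_const, nsmul_eq_mul]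
    congr 1
    simp [ZMod.card]
  have hne : ((p ^ n : ℕ) : ℝ≥0∞) ≠ 0 := by
    exact_mod_cast NeZero.ne (p ^ n)
  have htop : ((p ^ n : ℕ) : ℝ≥0∞) ≠ ⊤ := ENNReal.natCast_ne_top _
  have hmuS : μ S = ((p ^ n : ℕ) : ℝ≥0∞)⁻¹ := by
    exact ENNReal.eq_inv_of_mul_eq_one_left (by rwa [mul_comm] at h1)
  rw [hmuS]
  congr 1
  push_cast
  ring

lemma padicHaar_dvd_pow_sub (p : ℕ) [Fact p.Prime] (z : ℤ_[p]) (m : ℕ) :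
    padicHaar p {y : ℤ_[p] | (p : ℤ_[p]) ^ m ∣ y - z} = ((p : ℝ≥0∞) ^ m)⁻¹ := by
  have hset : {y : ℤ_[p] | (p : ℤ_[p]) ^ m ∣ y - z}
      = (fun y => -z + y) ⁻¹' {x : ℤ_[p] | (p : ℤ_[p]) ^ m ∣ x} := by
    ext y
    simp [neg_add_eq_sub]
  rw [hset, measure_preimage_add, padicHaar_dvd_pow]

/-- For a prime `p`, `z ∈ ℤ_p` and `k ≥ 0`, the Haar volume of the set of
`(x, y) ∈ ℤ_p²` with `p^k ∣ x*(y - z)` is at most `(k+1) p^{-k}`. -/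
theorem stmt14 (p : ℕ) [Fact p.Prime] (z : ℤ_[p]) (k : ℕ) :
    ((padicHaar p).prod (padicHaar p))
      {v : ℤ_[p] × ℤ_[p] | (p : ℤ_[p]) ^ k ∣ v.1 * (v.2 - z)}
      ≤ ((k : ℝ≥0∞) + 1) * ((p : ℝ≥0∞) ^ k)⁻¹ := by
  have hpne : (p : ℝ≥0∞) ≠ 0 := by
    exact_mod_cast (Nat.Prime.ne_zero (Fact.out : p.Prime))
  have hptop : (p : ℝ≥0∞) ≠ ⊤ := ENNReal.natCast_ne_top p
  have hsub : {v : ℤ_[p] × ℤ_[p] | (p : ℤ_[p]) ^ k ∣ v.1 * (v.2 - z)} ⊆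
      ⋃ j ∈ Finset.range (k + 1),
        ({x : ℤ_[p] | (p : ℤ_[p]) ^ j ∣ x} ×ˢ
          {y : ℤ_[p] | (p : ℤ_[p]) ^ (k - j) ∣ y - z}) := by
    intro v hv
    obtain ⟨i, hik, h1, h2⟩ :=
      prime_pow_dvd_mul_split (PadicInt.prime_p (p := p)) k v.1 (v.2 - z) hv
    exact Set.mem_biUnion (Finset.mem_range.2 (Nat.lt_succ_of_le hik)) ⟨h1, h2⟩
  calc ((padicHaar p).prod (padicHaar p))
        {v : ℤ_[p] × ℤ_[p] | (p : ℤ_[p]) ^ k ∣ v.1 * (v.2 - z)}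
      ≤ ∑ j ∈ Finset.range (k + 1), ((padicHaar p).prod (padicHaar p))
          ({x : ℤ_[p] | (p : ℤ_[p]) ^ j ∣ x} ×ˢ
            {y : ℤ_[p] | (p : ℤ_[p]) ^ (k - j) ∣ y - z}) :=
        (measure_mono hsub).trans (measure_biUnion_finset_le _ _)
    _ = ∑ j ∈ Finset.range (k + 1), ((p : ℝ≥0∞) ^ k)⁻¹ := by
        refine Finset.sum_congr rfl fun j hj => ?_
        have hjk : j ≤ k := Nat.lt_succ_iff.mp (Finset.mem_range.mp hj)
        rw [Measure.prod_prod, padicHaar_dvd_pow, padicHaar_dvd_pow_sub,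
          ← ENNReal.mul_inv (Or.inl (pow_ne_zero j hpne))
            (Or.inl (ENNReal.pow_ne_top hptop)),
          ← pow_add, Nat.add_sub_cancel' hjk]
    _ = ((k : ℝ≥0∞) + 1) * ((p : ℝ≥0∞) ^ k)⁻¹ := by
        rw [Finset.sum_const, Finset.card_range, nsmul_eq_mul]
        push_cast
        ring
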